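/- tan(π/11) + 4·sin(3π/11) = √11. -/

import Mathlib

theorem stmt1 : Real.tan (Real.pi/11) + 4*Real.sin (3*Real.pi/11) = Real.sqrt 11 := by
  have hpi := Real.pi_pos
  set θ := Real.pi/11 with hθ
  have hθpos : 0 < θ := by positivity
  have hθlt : θ < Real.pi / 2 := by rw [hθ]; linarith
  have hc : 0 < Real.cos θ := Real.cos_pos_of_mem_Ioo ⟨by linarith, hθlt⟩
  have hs : 0 < Real.sin θ := Real.sin_pos_of_pos_of_lt_pi hθpos (by linarith)
  set c := Real.cos θ with hcdef
  set s := Real.sin θ with hsdef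
  have hpyth : s ^ 2 + c ^ 2 = 1 := Real.sin_sq_add_cos_sq θ
  -- recursion for cos of multiple angles
  have hrec : ∀ a : ℝ, Real.cos (a + θ) = 2 * c * Real.cos a - Real.cos (a - θ) := by
    intro a
    have h1 := Real.cos_add a θ
    have h2 := Real.cos_sub a θ
    rw [← hcdef] at h1 h2
    linarith
  have r2 : Real.cos (2*θ) = 2*c*c - 1 := by
    rw [show (2:ℝ)*θ = θ + θ by ring]
    have := hrec θ
    simpa using this
  have r3 : Real.cos (3*θ) = 2*c*Real.cos (2*θ) - c := by
    have := hrec (2*θ)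
    rw [show (2:ℝ)*θ + θ = 3*θ by ring, show (2:ℝ)*θ - θ = θ by ring] at this
    exact this
  have r4 : Real.cos (4*θ) = 2*c*Real.cos (3*θ) - Real.cos (2*θ) := by
    have := hrec (3*θ)
    rw [show (3:ℝ)*θ + θ = 4*θ by ring, show (3:ℝ)*θ - θ = 2*θ by ring] at this
    exact this
  have r5 : Real.cos (5*θ) = 2*c*Real.cos (4*θ) - Real.cos (3*θ) := by
    have := hrec (4*θ)
    rw [show (4:ℝ)*θ + θ = 5*θ by ring, show (4:ℝ)*θ - θ = 3*θ by ring] at this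
    exact this
  have r6 : Real.cos (6*θ) = 2*c*Real.cos (5*θ) - Real.cos (4*θ) := by
    have := hrec (5*θ)
    rw [show (5:ℝ)*θ + θ = 6*θ by ring, show (5:ℝ)*θ - θ = 4*θ by ring] at this
    exact this
  have r7 : Real.cos (7*θ) = 2*c*Real.cos (6*θ) - Real.cos (5*θ) := by
    have := hrec (6*θ)
    rw [show (6:ℝ)*θ + θ = 7*θ by ring, show (6:ℝ)*θ - θ = 5*θ by ring] at this
    exact this
  have r8 : Real.cos (8*θ) = 2*c*Real.cos (7*θ) - Real.cos (6*θ) := by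
    have := hrec (7*θ)
    rw [show (7:ℝ)*θ + θ = 8*θ by ring, show (7:ℝ)*θ - θ = 6*θ by ring] at this
    exact this
  have r9 : Real.cos (9*θ) = 2*c*Real.cos (8*θ) - Real.cos (7*θ) := by
    have := hrec (8*θ)
    rw [show (8:ℝ)*θ + θ = 9*θ by ring, show (8:ℝ)*θ - θ = 7*θ by ring] at this
    exact this
  have r10 : Real.cos (10*θ) = 2*c*Real.cos (9*θ) - Real.cos (8*θ) := by
    have := hrec (9*θ)
    rw [show (9:ℝ)*θ + θ = 10*θ by ring, show (9:ℝ)*θ - θ = 8*θ by ring] at this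
    exact this
  have r11 : Real.cos (11*θ) = 2*c*Real.cos (10*θ) - Real.cos (9*θ) := by
    have := hrec (10*θ)
    rw [show (10:ℝ)*θ + θ = 11*θ by ring, show (10:ℝ)*θ - θ = 9*θ by ring] at this
    exact this
  have hT : Real.cos (11*θ) = 1024*c^11 - 2816*c^9 + 2816*c^7 - 1232*c^5 + 220*c^3 - 11*c := by
    simp only [r11, r10, r9, r8, r7, r6, r5, r4, r3, r2]
    ring
  have h11 : Real.cos (11*θ) = -1 := by
    rw [show 11*θ = Real.pi by rw [hθ]; ring]
    exact Real.cos_pi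
  have hQsq : (c + 1) * (32*c^5 - 16*c^4 - 32*c^3 + 12*c^2 + 6*c - 1)^2 = 0 := by
    rw [hT] at h11
    linear_combination h11
  have hQ : 32*c^5 - 16*c^4 - 32*c^3 + 12*c^2 + 6*c - 1 = 0 := by
    have hc1 : c + 1 ≠ 0 := by positivity
    have := (mul_eq_zero.mp hQsq).resolve_left hc1
    exact pow_eq_zero_iff (two_ne_zero) |>.mp this
  -- the expression
  have h3s : Real.sin (3*Real.pi/11) = 3*s - 4*s^3 := by
    rw [show 3*Real.pi/11 = 3*θ by rw [hθ]; ring]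
    exact Real.sin_three_mul θ
  have htan : Real.tan θ = s / c := Real.tan_eq_sin_div_cos θ
  set L := Real.tan (Real.pi/11) + 4*Real.sin (3*Real.pi/11) with hLdef
  have hLc : L * c = s * (16*c^3 - 4*c + 1) := by
    rw [hLdef, htan, h3s]
    field_simp
    ring_nf
    linear_combination (-16*c) * hpyth
  have hL2 : L^2 = 11 := by
    have hcne : c ≠ 0 := ne_of_gt hc
    have key : L^2 * c^2 = 11 * c^2 := by
      have h1 : (L*c)^2 = s^2 * (16*c^3 - 4*c + 1)^2 := by rw [hLc]; ring
      have hs2 : s^2 = 1 - c^2 := by linarith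
      rw [hs2] at h1
      linear_combination h1 + (-8*c^3 - 4*c^2 + 2*c - 1) * hQ
    have := mul_right_cancel₀ (pow_ne_zero 2 hcne) key
    exact this
  have hLpos : 0 < L := by
    have h1 : 0 < Real.tan (Real.pi/11) := by
      rw [show Real.pi/11 = θ from rfl]
      exact Real.tan_pos_of_pos_of_lt_pi_div_two hθpos hθlt
    have h2 : 0 < Real.sin (3*Real.pi/11) := by
      apply Real.sin_pos_of_pos_of_lt_pi <;> [positivity; linarith]
    rw [hLdef]; linarith
  rw [show (11:ℝ) = L^2 from hL2.symm, Real.sqrt_sq hLpos.le]
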